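/- Let L be a field extension of k, let α ∈ k be nonzero, and let s ∈ L satisfy s² = ι(α), with 1 and s linearly independent over k. Let A₀, B₀ ∈ M_n(k), set A = s·ι(A₀) and B = s·ι(B₀), and assume Aᵀ·M̄·A = M̄, Bᵀ·M̄·B = M̄, A² = −I_n, and B² = −I_n (so Inn_A and Inn_B are Type 4 k-involutions of SO(n,k,β)). Then there exists Q ∈ O(n,k,β) with ι(Q)⁻¹·A·ι(Q) = B. In particular, SO(n,k,β) has at most one isomorphy class of Type 4 k-involutions over O(n,k,β) for each square class of α. -/

import Mathlib

open Matrix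

section refl
variable {k : Type*} [Field k] {V : Type*} [AddCommGroup V] [Module k V]

/-- reflection in w -/
noncomputable def reflMap (β : V →ₗ[k] V →ₗ[k] k) (w : V) : V →ₗ[k] V :=
  LinearMap.id - (2 / β w w) • ((β.flip w).smulRight w)

lemma reflMap_apply (β : V →ₗ[k] V →ₗ[k] k) (w x : V) :
    reflMap β w x = x - ((2 / β w w) * β x w) • w := by
  simp [reflMap, smul_smul]

lemma reflMap_invol (β : V →ₗ[k] V →ₗ[k] k) (w : V) (hw : β w w ≠ 0) :
    Function.Involutive (reflMap β w) := by
  intro x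
  simp only [reflMap_apply, LinearMap.map_smul, LinearMap.map_sub, LinearMap.sub_apply,
    LinearMap.smul_apply, smul_eq_mul]
  match_scalars
  · ring
  · field_simp
    ring

/-- reflection as an equiv -/
noncomputable def reflEquiv (β : V →ₗ[k] V →ₗ[k] k) (w : V) (hw : β w w ≠ 0) : V ≃ₗ[k] V :=
  LinearEquiv.ofInvolutive (reflMap β w) (reflMap_invol β w hw)

lemma reflEquiv_apply (β : V →ₗ[k] V →ₗ[k] k) (w : V) (hw : β w w ≠ 0) (x : V) :
    reflEquiv β w hw x = x - ((2 / β w w) * β x w) • w := reflMap_apply β w x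

lemma reflEquiv_isometry (β : V →ₗ[k] V →ₗ[k] k) (hβ : ∀ x y, β x y = β y x)
    (w : V) (hw : β w w ≠ 0) (x y : V) :
    β (reflEquiv β w hw x) (reflEquiv β w hw y) = β x y := by
  simp only [reflEquiv_apply, LinearMap.map_smul, LinearMap.map_sub, LinearMap.sub_apply,
    LinearMap.smul_apply, smul_eq_mul]
  have h2 : β w y = β y w := hβ w y
  field_simp
  ring_nf
  linear_combination (-2 * β x w) * h2

lemma reflEquiv_fix (β : V →ₗ[k] V →ₗ[k] k) (w : V) (hw : β w w ≠ 0) (x : V)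
    (hx : β x w = 0) : reflEquiv β w hw x = x := by
  rw [reflEquiv_apply, hx, mul_zero, zero_smul, sub_zero]

/-- Witt extension step: an isometry sending u to v, fixing vectors orthogonal to u and v. -/
lemma witt_step (h2 : (2:k) ≠ 0) (β : V →ₗ[k] V →ₗ[k] k) (hβ : ∀ x y, β x y = β y x)
    (u v : V) (huv : β u u = β v v) (hv : β v v ≠ 0) :
    ∃ ψ : V ≃ₗ[k] V, (∀ x y, β (ψ x) (ψ y) = β x y) ∧ ψ u = v ∧
      ∀ x, β x u = 0 → β x v = 0 → ψ x = x := by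
  by_cases h : β (u - v) (u - v) ≠ 0
  · have e1 : β (u - v) (u - v) = 2 * (β v v - β u v) := by
      simp only [map_sub, LinearMap.sub_apply]
      rw [hβ v u, huv]; ring
    have e2 : β u (u - v) = β v v - β u v := by
      simp only [map_sub]; rw [huv]
    have hne : β v v - β u v ≠ 0 := by
      intro h0
      rw [e1, h0, mul_zero] at h
      exact h rfl
    refine ⟨reflEquiv β (u - v) h, fun x y => reflEquiv_isometry β hβ _ h x y, ?_, ?_⟩
    · rw [reflEquiv_apply, e1, e2]
      match_scalars
      · field_simp; ring
      · field_simp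
    · intro x hxu hxv
      exact reflEquiv_fix β _ h x (by simp [map_sub, hxu, hxv])
  · push_neg at h
    have huvv : β u v = β v v := by
      have hx : β (u - v) (u - v) = β u u - 2 * β u v + β v v := by
        simp only [map_sub, LinearMap.sub_apply]; rw [hβ v u]; ring
      rw [hx, huv] at h
      exact mul_left_cancel₀ h2 (by linear_combination -h)
    have hsum : β (u + v) (u + v) = 4 * β v v := by
      have hy : β (u + v) (u + v) = β u u + 2 * β u v + β v v := by
        simp only [map_add, LinearMap.add_apply]; rw [hβ v u]; ring
      rw [hy, huv, huvv]; ring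
    have h4 : (4 : k) ≠ 0 := by
      have h44 : (4 : k) = 2 * 2 := by norm_num
      rw [h44]; exact mul_ne_zero h2 h2
    have hne : β (u + v) (u + v) ≠ 0 := by rw [hsum]; exact mul_ne_zero h4 hv
    refine ⟨(reflEquiv β (u + v) hne).trans (reflEquiv β v hv), ?_, ?_, ?_⟩
    · intro x y
      simp only [LinearEquiv.trans_apply]
      rw [reflEquiv_isometry β hβ v hv, reflEquiv_isometry β hβ _ hne]
    · simp only [LinearEquiv.trans_apply]
      have e2 : β u (u + v) = β v v + β u v := by
        simp only [map_add]; rw [huv]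
      have step1 : reflEquiv β (u + v) hne u = -v := by
        rw [reflEquiv_apply, e2, hsum, huvv]
        match_scalars
        · field_simp; ring
        · field_simp; ring
      rw [step1, reflEquiv_apply]
      simp only [map_neg, LinearMap.neg_apply]
      match_scalars
      field_simp
      ring
    · intro x hxu hxv
      simp only [LinearEquiv.trans_apply]
      rw [reflEquiv_fix β _ hne x (by simp [map_add, hxu, hxv]), reflEquiv_fix β v hv x hxv]

end refl

section core

lemma exists_anisotropic {k : Type*} [Field k] {V : Type*} [AddCommGroup V] [Module k V]
    (h2 : (2:k) ≠ 0) (β : V →ₗ[k] V →ₗ[k] k) (hs : ∀ x y, β x y = β y x)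
    (hsep : ∀ x, (∀ y, β x y = 0) → x = 0) [Nontrivial V] :
    ∃ v : V, β v v ≠ 0 := by
  obtain ⟨x, hx⟩ := exists_ne (0 : V)
  by_contra hall
  push_neg at hall
  apply hx
  apply hsep
  intro y
  have h1 := hall (x + y)
  have hx2 := hall x
  have hy2 := hall y
  simp only [map_add, LinearMap.add_apply] at h1
  have hxy : β x y = β y x := hs x y
  have : 2 * β x y = 0 := by linear_combination h1 - hx2 - hy2 + hxy
  exact (mul_eq_zero.mp this).resolve_left h2

universe u v w

set_option maxHeartbeats 1000000 in
theorem core_induction (k : Type u) [Field k] (h2 : (2:k) ≠ 0) (d : k) (hd : d ≠ 0) (m : ℕ) :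
    ∀ (V₁ : Type v) (V₂ : Type w) [AddCommGroup V₁] [Module k V₁] [AddCommGroup V₂]
      [Module k V₂] [FiniteDimensional k V₁],
      Module.finrank k V₁ = m →
      ∀ (β₁ : V₁ →ₗ[k] V₁ →ₗ[k] k) (β₂ : V₂ →ₗ[k] V₂ →ₗ[k] k),
      (∀ x y, β₁ x y = β₁ y x) → (∀ x y, β₂ x y = β₂ y x) →
      (∀ x, (∀ y, β₁ x y = 0) → x = 0) →
      ∀ (A₁ : V₁ →ₗ[k] V₁) (A₂ : V₂ →ₗ[k] V₂),
      (∀ x, A₁ (A₁ x) = d • x) → (∀ x, A₂ (A₂ x) = d • x) →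
      (∀ x y, β₁ (A₁ x) y = - β₁ x (A₁ y)) → (∀ x y, β₂ (A₂ x) y = - β₂ x (A₂ y)) →
      ∀ (e : V₁ ≃ₗ[k] V₂), (∀ x y, β₂ (e x) (e y) = β₁ x y) →
      ∃ φ : V₁ ≃ₗ[k] V₂, (∀ x y, β₂ (φ x) (φ y) = β₁ x y) ∧ ∀ x, φ (A₁ x) = A₂ (φ x) := by
  induction m using Nat.strong_induction_on with
  | _ m IH =>
    intro V₁ V₂ _ _ _ _ _ hm β₁ β₂ hs₁ hs₂ hsep₁ A₁ A₂ hA₁ hA₂ hsk₁ hsk₂ e he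
    rcases Nat.eq_zero_or_pos m with hm0 | hmpos
    · subst hm0
      haveI : Subsingleton V₁ := Module.finrank_zero_iff.mp hm
      refine ⟨e, he, fun x => ?_⟩
      rw [Subsingleton.elim x 0]
      simp
    · haveI : Nontrivial V₁ := Module.finrank_pos_iff.mp (by rw [hm]; exact hmpos)
      obtain ⟨v, hv⟩ := exists_anisotropic h2 β₁ hs₁ hsep₁
      obtain ⟨c, hc⟩ : ∃ c, β₁ v v = c := ⟨_, rfl⟩
      obtain ⟨w, hwdef⟩ : ∃ w, A₁ v = w := ⟨_, rfl⟩
      rw [hc] at hv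
      -- basic orthogonality facts on the V₁ side
      have hvw : β₁ v w = 0 := by
        have h := hsk₁ v v
        rw [hwdef] at h
        rw [hs₁ w v] at h
        have h' : 2 * β₁ v w = 0 := by linear_combination h
        exact (mul_eq_zero.mp h').resolve_left h2
      have hwv : β₁ w v = 0 := by rw [hs₁ w v]; exact hvw
      have hAw : A₁ w = d • v := by rw [← hwdef, hA₁ v]
      have hww : β₁ w w = -(d * c) := by
        have h := hsk₁ v w
        rw [hwdef, hAw, _root_.map_smul, smul_eq_mul, hc] at h
        rw [hs₁ w w] at h
        exact h
      have hεne : -(d * c) ≠ 0 := neg_ne_zero.mpr (mul_ne_zero hd hv)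
      -- V₂ side vectors
      obtain ⟨v₂, hv₂def⟩ : ∃ v₂, e v = v₂ := ⟨_, rfl⟩
      obtain ⟨w₂, hw₂def⟩ : ∃ w₂, A₂ v₂ = w₂ := ⟨_, rfl⟩
      have hv₂v₂ : β₂ v₂ v₂ = c := by rw [← hv₂def, he v v, hc]
      have hv₂w₂ : β₂ v₂ w₂ = 0 := by
        have h := hsk₂ v₂ v₂
        rw [hw₂def] at h
        rw [hs₂ w₂ v₂] at h
        have h' : 2 * β₂ v₂ w₂ = 0 := by linear_combination h
        exact (mul_eq_zero.mp h').resolve_left h2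
      have hw₂v₂ : β₂ w₂ v₂ = 0 := by rw [hs₂ w₂ v₂]; exact hv₂w₂
      have hAw₂ : A₂ w₂ = d • v₂ := by rw [← hw₂def, hA₂ v₂]
      have hw₂w₂ : β₂ w₂ w₂ = -(d * c) := by
        have h := hsk₂ v₂ w₂
        rw [hw₂def, hAw₂, _root_.map_smul, smul_eq_mul, hv₂v₂] at h
        rw [hs₂ w₂ w₂] at h
        exact h
      -- Witt step: adjust e so that it sends w to w₂
      have hew : β₂ (e w) (e w) = -(d * c) := by rw [he w w, hww]
      obtain ⟨ψ, hψiso, hψw, hψfix⟩ := witt_step h2 β₂ hs₂ (e w) w₂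
        (by rw [hew, hw₂w₂]) (by rw [hw₂w₂]; exact hεne)
      obtain ⟨e', he'def⟩ : ∃ e', e.trans ψ = e' := ⟨_, rfl⟩
      have he'ap : ∀ x, e' x = ψ (e x) := fun x => by rw [← he'def]; rfl
      have he' : ∀ x y, β₂ (e' x) (e' y) = β₁ x y := by
        intro x y
        rw [he'ap, he'ap, hψiso, he]
      have he'v : e' v = v₂ := by
        rw [he'ap, hψfix (e v) (by rw [he v w, hvw]) (by rw [hv₂def]; exact hv₂w₂), hv₂def]
      have he'w : e' w = w₂ := by rw [he'ap]; exact hψw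
      -- the orthogonal complement subspaces
      set W₁ : Submodule k V₁ := LinearMap.ker (β₁ v) ⊓ LinearMap.ker (β₁ w) with hW₁def
      set W₂ : Submodule k V₂ := LinearMap.ker (β₂ v₂) ⊓ LinearMap.ker (β₂ w₂) with hW₂def
      have hmemW₁ : ∀ x : V₁, x ∈ W₁ ↔ β₁ v x = 0 ∧ β₁ w x = 0 := by
        intro x
        rw [hW₁def, Submodule.mem_inf, LinearMap.mem_ker, LinearMap.mem_ker]
      have hmemW₂ : ∀ x : V₂, x ∈ W₂ ↔ β₂ v₂ x = 0 ∧ β₂ w₂ x = 0 := by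
        intro x
        rw [hW₂def, Submodule.mem_inf, LinearMap.mem_ker, LinearMap.mem_ker]
      -- finrank bound
      have hrank : Module.finrank k W₁ < m := by
        rw [← hm]
        apply Submodule.finrank_lt
        intro htop
        have hvW₁ : v ∈ W₁ := htop ▸ Submodule.mem_top
        exact hv (hc ▸ ((hmemW₁ v).mp hvW₁).1)
      -- invariance of the complements
      have hinv₁ : ∀ x ∈ W₁, A₁ x ∈ W₁ := by
        intro x hx
        obtain ⟨hx1, hx2⟩ := (hmemW₁ x).mp hx
        rw [hmemW₁]
        constructor
        · have h := hsk₁ v x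
          rw [hwdef] at h
          rw [show β₁ v (A₁ x) = - β₁ w x by linear_combination h, hx2, neg_zero]
        · have h := hsk₁ v (A₁ x)
          rw [hA₁ x, _root_.map_smul, smul_eq_mul, hx1, mul_zero, neg_zero, hwdef] at h
          exact h
      have hinv₂ : ∀ x ∈ W₂, A₂ x ∈ W₂ := by
        intro x hx
        obtain ⟨hx1, hx2⟩ := (hmemW₂ x).mp hx
        rw [hmemW₂]
        constructor
        · have h := hsk₂ v₂ x
          rw [hw₂def] at h
          rw [show β₂ v₂ (A₂ x) = - β₂ w₂ x by linear_combination h, hx2, neg_zero]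
        · have h := hsk₂ v₂ (A₂ x)
          rw [hA₂ x, _root_.map_smul, smul_eq_mul, hx1, mul_zero, neg_zero, hw₂def] at h
          exact h
      set AW₁ := A₁.restrict hinv₁ with hAW₁def
      set AW₂ := A₂.restrict hinv₂ with hAW₂def
      set βW₁ := LinearMap.BilinForm.restrict β₁ W₁ with hβW₁def
      set βW₂ := LinearMap.BilinForm.restrict β₂ W₂ with hβW₂def
      have hβWap₁ : ∀ x y : W₁, βW₁ x y = β₁ (x : V₁) (y : V₁) := fun x y => rfl
      have hβWap₂ : ∀ x y : W₂, βW₂ x y = β₂ (x : V₂) (y : V₂) := fun x y => rfl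
      have hAWap₁ : ∀ x : W₁, (AW₁ x : V₁) = A₁ (x : V₁) := fun x => rfl
      have hAWap₂ : ∀ x : W₂, (AW₂ x : V₂) = A₂ (x : V₂) := fun x => rfl
      -- the restriction of e' to W₁ lands in W₂ and is an isometry
      have hmap : W₁.map (e' : V₁ →ₗ[k] V₂) = W₂ := by
        apply le_antisymm
        · rintro z ⟨x, hx, rfl⟩
          obtain ⟨hx1, hx2⟩ := (hmemW₁ x).mp hx
          rw [hmemW₂]
          constructor
          · rw [show ((e' : V₁ →ₗ[k] V₂) x : V₂) = e' x from rfl, ← he'v, he' v x, hx1]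
          · rw [show ((e' : V₁ →ₗ[k] V₂) x : V₂) = e' x from rfl, ← he'w, he' w x, hx2]
        · intro z hz
          obtain ⟨hz1, hz2⟩ := (hmemW₂ z).mp hz
          refine ⟨e'.symm z, (hmemW₁ _).mpr ⟨?_, ?_⟩, by simp⟩
          · have h := he' v (e'.symm z)
            rw [LinearEquiv.apply_symm_apply, he'v] at h
            rw [← h, hz1]
          · have h := he' w (e'.symm z)
            rw [LinearEquiv.apply_symm_apply, he'w] at h
            rw [← h, hz2]
      set eW : W₁ ≃ₗ[k] W₂ := (e'.submoduleMap W₁).trans (LinearEquiv.ofEq _ _ hmap)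
        with heWdef
      have heWcoe : ∀ x : W₁, (eW x : V₂) = e' (x : V₁) := fun x => rfl
      -- hypotheses for the inductive step
      have hsepW₁ : ∀ x : W₁, (∀ y : W₁, βW₁ x y = 0) → x = 0 := by
        intro x hx
        obtain ⟨hx1, hx2⟩ := (hmemW₁ (x : V₁)).mp x.2
        have hcoe : (x : V₁) = 0 := by
          apply hsep₁
          intro z
          have hy0mem : z - (c⁻¹ * β₁ v z) • v - ((-(d * c))⁻¹ * β₁ w z) • w ∈ W₁ := by
            rw [hmemW₁]
            constructor
            · simp only [map_sub, _root_.map_smul, smul_eq_mul]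
              rw [hc, hvw]
              field_simp
              ring
            · simp only [map_sub, _root_.map_smul, smul_eq_mul]
              rw [hwv, hww]
              field_simp
              ring
          have h0 := hx ⟨_, hy0mem⟩
          rw [hβWap₁] at h0
          simp only [map_sub, _root_.map_smul, smul_eq_mul] at h0
          have hxv : β₁ (x : V₁) v = 0 := by rw [hs₁]; exact hx1
          have hxw : β₁ (x : V₁) w = 0 := by rw [hs₁]; exact hx2
          rw [hxv, hxw] at h0
          linear_combination h0
        exact Subtype.ext hcoe
      have hAW₁sq : ∀ x : W₁, AW₁ (AW₁ x) = d • x := by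
        intro x
        apply Subtype.ext
        rw [hAWap₁, hAWap₁]
        rw [show ((d • x : W₁) : V₁) = d • (x : V₁) from rfl]
        exact hA₁ (x : V₁)
      have hAW₂sq : ∀ x : W₂, AW₂ (AW₂ x) = d • x := by
        intro x
        apply Subtype.ext
        rw [hAWap₂, hAWap₂]
        rw [show ((d • x : W₂) : V₂) = d • (x : V₂) from rfl]
        exact hA₂ (x : V₂)
      have hsymW₁ : ∀ x y : W₁, βW₁ x y = βW₁ y x := fun x y => hs₁ _ _
      have hsymW₂ : ∀ x y : W₂, βW₂ x y = βW₂ y x := fun x y => hs₂ _ _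
      have hskW₁ : ∀ x y : W₁, βW₁ (AW₁ x) y = - βW₁ x (AW₁ y) := by
        intro x y
        rw [hβWap₁, hβWap₁, hAWap₁, hAWap₁]
        exact hsk₁ _ _
      have hskW₂ : ∀ x y : W₂, βW₂ (AW₂ x) y = - βW₂ x (AW₂ y) := by
        intro x y
        rw [hβWap₂, hβWap₂, hAWap₂, hAWap₂]
        exact hsk₂ _ _
      have heWiso : ∀ x y : W₁, βW₂ (eW x) (eW y) = βW₁ x y := by
        intro x y
        rw [hβWap₂, hβWap₁, heWcoe, heWcoe]
        exact he' _ _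
      obtain ⟨ρ, hρiso, hρint⟩ := IH (Module.finrank k W₁) hrank W₁ W₂ rfl βW₁ βW₂
        hsymW₁ hsymW₂ hsepW₁ AW₁ AW₂ hAW₁sq hAW₂sq hskW₁ hskW₂ eW heWiso
      -- assembly of the final isometry
      have hρ' : ∀ a b : W₁, β₂ ((ρ a : V₂)) ((ρ b : V₂)) = β₁ (a : V₁) (b : V₁) := by
        intro a b
        have h := hρiso a b
        rwa [hβWap₂, hβWap₁] at h
      have hρint' : ∀ a : W₁, ((ρ (AW₁ a) : V₂)) = A₂ ((ρ a : V₂)) := by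
        intro a
        rw [hρint a, hAWap₂]
      -- projections onto the complements
      have hp₁mem : ∀ x : V₁, x - (c⁻¹ * β₁ v x) • v - ((-(d * c))⁻¹ * β₁ w x) • w ∈ W₁ := by
        intro x
        rw [hmemW₁]
        constructor
        · simp only [map_sub, _root_.map_smul, smul_eq_mul]
          rw [hc, hvw]
          field_simp
          ring
        · simp only [map_sub, _root_.map_smul, smul_eq_mul]
          rw [hwv, hww]
          field_simp
          ring
      have hp₂mem : ∀ z : V₂, z - (c⁻¹ * β₂ v₂ z) • v₂ - ((-(d * c))⁻¹ * β₂ w₂ z) • w₂ ∈ W₂ := by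
        intro z
        rw [hmemW₂]
        constructor
        · simp only [map_sub, _root_.map_smul, smul_eq_mul]
          rw [hv₂v₂, hv₂w₂]
          field_simp
          ring
        · simp only [map_sub, _root_.map_smul, smul_eq_mul]
          rw [hw₂v₂, hw₂w₂]
          field_simp
          ring
      set p₁raw : V₁ →ₗ[k] V₁ := LinearMap.id - c⁻¹ • ((β₁ v).smulRight v)
        - (-(d * c))⁻¹ • ((β₁ w).smulRight w) with hp₁rawdef
      have hp₁raw_apply : ∀ x, p₁raw x
          = x - (c⁻¹ * β₁ v x) • v - ((-(d * c))⁻¹ * β₁ w x) • w := by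
        intro x
        rw [hp₁rawdef]
        simp only [LinearMap.sub_apply, LinearMap.smul_apply, LinearMap.smulRight_apply,
          LinearMap.id_apply, smul_smul]
      set p₂raw : V₂ →ₗ[k] V₂ := LinearMap.id - c⁻¹ • ((β₂ v₂).smulRight v₂)
        - (-(d * c))⁻¹ • ((β₂ w₂).smulRight w₂) with hp₂rawdef
      have hp₂raw_apply : ∀ z, p₂raw z
          = z - (c⁻¹ * β₂ v₂ z) • v₂ - ((-(d * c))⁻¹ * β₂ w₂ z) • w₂ := by
        intro z
        rw [hp₂rawdef]
        simp only [LinearMap.sub_apply, LinearMap.smul_apply, LinearMap.smulRight_apply,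
          LinearMap.id_apply, smul_smul]
      set p₁ : V₁ →ₗ[k] W₁ := p₁raw.codRestrict W₁
        (fun x => by rw [hp₁raw_apply]; exact hp₁mem x) with hp₁def
      set p₂ : V₂ →ₗ[k] W₂ := p₂raw.codRestrict W₂
        (fun z => by rw [hp₂raw_apply]; exact hp₂mem z) with hp₂def
      have hp₁coe : ∀ x, ((p₁ x : V₁))
          = x - (c⁻¹ * β₁ v x) • v - ((-(d * c))⁻¹ * β₁ w x) • w := by
        intro x
        rw [hp₁def, LinearMap.codRestrict_apply]
        exact hp₁raw_apply x
      have hp₂coe : ∀ z, ((p₂ z : V₂))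
          = z - (c⁻¹ * β₂ v₂ z) • v₂ - ((-(d * c))⁻¹ * β₂ w₂ z) • w₂ := by
        intro z
        rw [hp₂def, LinearMap.codRestrict_apply]
        exact hp₂raw_apply z
      -- the two linear maps
      set f : V₁ →ₗ[k] V₂ := (c⁻¹ • ((β₁ v).smulRight v₂))
        + ((-(d * c))⁻¹ • ((β₁ w).smulRight w₂))
        + (W₂.subtype ∘ₗ (ρ : W₁ →ₗ[k] W₂) ∘ₗ p₁) with hfdef
      set g : V₂ →ₗ[k] V₁ := (c⁻¹ • ((β₂ v₂).smulRight v))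
        + ((-(d * c))⁻¹ • ((β₂ w₂).smulRight w))
        + (W₁.subtype ∘ₗ (ρ.symm : W₂ →ₗ[k] W₁) ∘ₗ p₂) with hgdef
      have hf_apply : ∀ x, f x = (c⁻¹ * β₁ v x) • v₂ + ((-(d * c))⁻¹ * β₁ w x) • w₂
          + ((ρ (p₁ x) : V₂)) := by
        intro x
        rw [hfdef]
        simp only [LinearMap.add_apply, LinearMap.smul_apply, LinearMap.smulRight_apply,
          LinearMap.comp_apply, Submodule.coe_subtype, LinearEquiv.coe_coe, smul_smul]
      have hg_apply : ∀ z, g z = (c⁻¹ * β₂ v₂ z) • v + ((-(d * c))⁻¹ * β₂ w₂ z) • w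
          + ((ρ.symm (p₂ z) : V₁)) := by
        intro z
        rw [hgdef]
        simp only [LinearMap.add_apply, LinearMap.smul_apply, LinearMap.smulRight_apply,
          LinearMap.comp_apply, Submodule.coe_subtype, LinearEquiv.coe_coe, smul_smul]
      -- key pairing computations
      have hmemρ : ∀ a : W₁, β₂ v₂ ((ρ a : V₂)) = 0 ∧ β₂ w₂ ((ρ a : V₂)) = 0 :=
        fun a => (hmemW₂ _).mp (ρ a).2
      have hmemρ' : ∀ b : W₂, β₁ v ((ρ.symm b : V₁)) = 0 ∧ β₁ w ((ρ.symm b : V₁)) = 0 :=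
        fun b => (hmemW₁ _).mp (ρ.symm b).2
      have hβv₂f : ∀ x, β₂ v₂ (f x) = β₁ v x := by
        intro x
        rw [hf_apply]
        simp only [map_add, _root_.map_smul, smul_eq_mul]
        rw [hv₂v₂, hv₂w₂, (hmemρ (p₁ x)).1]
        field_simp
        ring
      have hβw₂f : ∀ x, β₂ w₂ (f x) = β₁ w x := by
        intro x
        rw [hf_apply]
        simp only [map_add, _root_.map_smul, smul_eq_mul]
        rw [hw₂v₂, hw₂w₂, (hmemρ (p₁ x)).2]
        field_simp
        ring
      have hβvg : ∀ z, β₁ v (g z) = β₂ v₂ z := by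
        intro z
        rw [hg_apply]
        simp only [map_add, _root_.map_smul, smul_eq_mul]
        rw [hc, hvw, (hmemρ' (p₂ z)).1]
        field_simp
        ring
      have hβwg : ∀ z, β₁ w (g z) = β₂ w₂ z := by
        intro z
        rw [hg_apply]
        simp only [map_add, _root_.map_smul, smul_eq_mul]
        rw [hwv, hww, (hmemρ' (p₂ z)).2]
        field_simp
        ring
      -- g ∘ f = id and f ∘ g = id
      have hgf : ∀ x, g (f x) = x := by
        intro x
        have hp₂f : p₂ (f x) = ρ (p₁ x) := by
          apply Subtype.ext
          rw [hp₂coe, hβv₂f, hβw₂f, hf_apply]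
          abel
        rw [hg_apply, hβv₂f, hβw₂f, hp₂f, LinearEquiv.symm_apply_apply]
        rw [hp₁coe]
        abel
      have hfg : ∀ z, f (g z) = z := by
        intro z
        have hp₁g : p₁ (g z) = ρ.symm (p₂ z) := by
          apply Subtype.ext
          rw [hp₁coe, hβvg, hβwg, hg_apply]
          abel
        rw [hf_apply, hβvg, hβwg, hp₁g, LinearEquiv.apply_symm_apply]
        rw [hp₂coe]
        abel
      -- isometry property
      have hββ : ∀ x y, β₁ ((p₁ x : V₁)) ((p₁ y : V₁)) = β₁ x y
          - c⁻¹ * (β₁ v x * β₁ v y) - (-(d * c))⁻¹ * (β₁ w x * β₁ w y) := by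
        intro x y
        rw [hp₁coe x, hp₁coe y]
        simp only [map_sub, _root_.map_smul, LinearMap.sub_apply, LinearMap.smul_apply,
          smul_eq_mul]
        rw [hs₁ x v, hs₁ x w, hc, hvw, hwv, hww]
        field_simp
        ring
      have hiso : ∀ x y, β₂ (f x) (f y) = β₁ x y := by
        intro x y
        obtain ⟨rx, hrx⟩ : ∃ r : V₂, ((ρ (p₁ x) : V₂)) = r := ⟨_, rfl⟩
        obtain ⟨ry, hry⟩ : ∃ r : V₂, ((ρ (p₁ y) : V₂)) = r := ⟨_, rfl⟩
        have hmx := hmemρ (p₁ x)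
        rw [hrx] at hmx
        have hmy := hmemρ (p₁ y)
        rw [hry] at hmy
        have hmx1 : β₂ rx v₂ = 0 := by rw [hs₂]; exact hmx.1
        have hmx2 : β₂ rx w₂ = 0 := by rw [hs₂]; exact hmx.2
        have hrr : β₂ rx ry = β₁ x y - c⁻¹ * (β₁ v x * β₁ v y)
            - (-(d * c))⁻¹ * (β₁ w x * β₁ w y) := by
          rw [← hrx, ← hry, hρ', hββ]
        rw [hf_apply x, hf_apply y, hrx, hry]
        simp only [map_add, _root_.map_smul, LinearMap.add_apply, LinearMap.smul_apply,
          smul_eq_mul]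
        rw [hv₂v₂, hv₂w₂, hw₂v₂, hw₂w₂, hmy.1, hmy.2, hmx1, hmx2, hrr]
        field_simp
        ring
      -- intertwining property
      have h1 : ∀ x, β₁ v (A₁ x) = - β₁ w x := by
        intro x
        have h := hsk₁ v x
        rw [hwdef] at h
        linear_combination h
      have h2 : ∀ x, β₁ w (A₁ x) = -(d * β₁ v x) := by
        intro x
        have h := hsk₁ w x
        rw [hAw, _root_.map_smul, LinearMap.smul_apply, smul_eq_mul] at h
        linear_combination h
      have hint : ∀ x, f (A₁ x) = A₂ (f x) := by
        intro x
        have hp₁A : p₁ (A₁ x) = AW₁ (p₁ x) := by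
          apply Subtype.ext
          rw [hp₁coe, hAWap₁, hp₁coe, h1, h2]
          rw [map_sub, map_sub, _root_.map_smul, _root_.map_smul, hwdef, hAw]
          match_scalars
          · ring
          · field_simp
          · field_simp
        rw [hf_apply (A₁ x), h1, h2, hp₁A, hρint', hf_apply x]
        rw [map_add, map_add, _root_.map_smul, _root_.map_smul, hw₂def, hAw₂]
        match_scalars
        · field_simp
        · field_simp
        · ring
      exact ⟨LinearEquiv.ofLinear f g
          (by ext z; simp only [LinearMap.comp_apply, LinearMap.id_apply]; exact hfg z)
          (by ext x; simp only [LinearMap.comp_apply, LinearMap.id_apply]; exact hgf x),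
        fun x y => by simp only [LinearEquiv.ofLinear_apply]; exact hiso x y,
        fun x => by simp only [LinearEquiv.ofLinear_apply]; exact hint x⟩


end core

set_option maxHeartbeats 1000000 in
/-- Any two Type 4 involutions of `SO(n,k,β)` (for the same square root `s` of `α`)
are isomorphic over `O(n,k,β)`. -/
theorem type4_isomorphy {k L : Type*} [Field k] [Field L] [Algebra k L]
    (hchar : (2 : k) ≠ 0) {n : ℕ} (hn : 2 < n)
    (M : Matrix (Fin n) (Fin n) k) (hMdiag : M.IsDiag) (hM : IsUnit M)
    (α : k) (hα : α ≠ 0) (s : L) (hs : s ^ 2 = algebraMap k L α)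
    (hind : LinearIndependent k ![(1 : L), s])
    (A₀ B₀ : Matrix (Fin n) (Fin n) k) (A B : Matrix (Fin n) (Fin n) L)
    (hAdef : A = s • A₀.map (algebraMap k L)) (hBdef : B = s • B₀.map (algebraMap k L))
    (hAorth : Aᵀ * M.map (algebraMap k L) * A = M.map (algebraMap k L))
    (hBorth : Bᵀ * M.map (algebraMap k L) * B = M.map (algebraMap k L))
    (hA2 : A * A = -1) (hB2 : B * B = -1) :
    ∃ Q : Matrix (Fin n) (Fin n) k, Qᵀ * M * Q = M ∧
      (Q.map (algebraMap k L))⁻¹ * A * Q.map (algebraMap k L) = B := by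
  have hι : Function.Injective (algebraMap k L) := (algebraMap k L).injective
  set ι : Matrix (Fin n) (Fin n) k →+* Matrix (Fin n) (Fin n) L :=
    (algebraMap k L).mapMatrix with hιdef
  have hιap : ∀ X : Matrix (Fin n) (Fin n) k, X.map (algebraMap k L) = ι X := fun _ => rfl
  have hιinj : Function.Injective ι := by
    intro X Y h
    ext i j
    have h' : ι X i j = ι Y i j := by rw [h]
    rw [hιdef] at h'
    simp only [RingHom.mapMatrix_apply, Matrix.map_apply] at h'
    exact hι h'
  have hιsmul : ∀ (a : k) (X : Matrix (Fin n) (Fin n) k),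
      (algebraMap k L a) • ι X = ι (a • X) := by
    intro a X
    ext i j
    rw [hιdef]
    simp only [RingHom.mapMatrix_apply, Matrix.smul_apply, Matrix.map_apply, smul_eq_mul,
      _root_.map_mul]
  have hιT : ∀ X : Matrix (Fin n) (Fin n) k, ι (Xᵀ) = (ι X)ᵀ := by
    intro X
    ext i j
    rw [hιdef]
    simp only [RingHom.mapMatrix_apply, Matrix.map_apply, Matrix.transpose_apply]
  -- push the hypotheses down to k
  have key : ∀ (C₀ : Matrix (Fin n) (Fin n) k) (C : Matrix (Fin n) (Fin n) L),
      C = s • C₀.map (algebraMap k L) →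
      Cᵀ * M.map (algebraMap k L) * C = M.map (algebraMap k L) → C * C = -1 →
      α • (C₀ᵀ * M * C₀) = M ∧ α • (C₀ * C₀) = -1 := by
    intro C₀ C hCdef hCorth hC2
    rw [hCdef] at hCorth hC2
    rw [hιap, hιap] at hCorth
    rw [hιap] at hC2
    constructor
    · apply hιinj
      rw [← hιsmul, _root_.map_mul, _root_.map_mul, hιT, ← hs]
      rw [Matrix.transpose_smul, Matrix.smul_mul, Matrix.smul_mul, Matrix.mul_smul] at hCorth
      rw [sq, ← smul_smul]
      exact hCorth
    · apply hιinj
      rw [← hιsmul, _root_.map_mul, ← hs, _root_.map_neg, _root_.map_one]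
      rw [Matrix.smul_mul, Matrix.mul_smul] at hC2
      rw [sq, ← smul_smul]
      exact hC2
  obtain ⟨hA₀orth, hA₀2⟩ := key A₀ A hAdef hAorth hA2
  obtain ⟨hB₀orth, hB₀2⟩ := key B₀ B hBdef hBorth hB2
  -- constants
  set d : k := -α⁻¹ with hddef
  have hd : d ≠ 0 := neg_ne_zero.mpr (inv_ne_zero hα)
  have hsq : ∀ C₀ : Matrix (Fin n) (Fin n) k, α • (C₀ * C₀) = -1 → C₀ * C₀ = d • 1 := by
    intro C₀ h
    have h' : α⁻¹ • (α • (C₀ * C₀)) = α⁻¹ • (-1 : Matrix (Fin n) (Fin n) k) := by rw [h]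
    rw [smul_smul, inv_mul_cancel₀ hα, one_smul] at h'
    rw [h', hddef, neg_smul, smul_neg]
  have hA₀sq1 : A₀ * A₀ = d • 1 := hsq A₀ hA₀2
  have hB₀sq1 : B₀ * B₀ = d • 1 := hsq B₀ hB₀2
  have hαd : α * d = -1 := by rw [hddef]; field_simp
  -- skewness at the matrix level
  have hskewM : ∀ C₀ : Matrix (Fin n) (Fin n) k, α • (C₀ᵀ * M * C₀) = M → C₀ * C₀ = d • 1 →
      M * C₀ = -(C₀ᵀ * M) := by
    intro C₀ horth hsq1
    have h1 : M * C₀ = (α • (C₀ᵀ * M * C₀)) * C₀ := by rw [horth]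
    rw [Matrix.smul_mul, mul_assoc (C₀ᵀ * M) C₀ C₀, hsq1, Matrix.mul_smul, mul_one,
      smul_smul, hαd, neg_one_smul] at h1
    exact h1
  have hAskewM : M * A₀ = -(A₀ᵀ * M) := hskewM A₀ hA₀orth hA₀sq1
  have hBskewM : M * B₀ = -(B₀ᵀ * M) := hskewM B₀ hB₀orth hB₀sq1
  -- the bilinear form attached to M
  set β : (Fin n → k) →ₗ[k] (Fin n → k) →ₗ[k] k := LinearMap.mk₂ k
      (fun u x => u ⬝ᵥ M.mulVec x)
      (fun u u' x => by rw [add_dotProduct])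
      (fun a u x => by rw [smul_dotProduct])
      (fun u x y => by rw [Matrix.mulVec_add, dotProduct_add])
      (fun a u x => by rw [Matrix.mulVec_smul, dotProduct_smul])
    with hβdef
  have hβap : ∀ u x : Fin n → k, β u x = u ⬝ᵥ M *ᵥ x := fun u x => rfl
  have hMsym : Mᵀ = M := hMdiag.isSymm
  have hsym : ∀ u x : Fin n → k, β u x = β x u := by
    intro u x
    have h2 : u ᵥ* M = M *ᵥ u := by
      conv_lhs => rw [← hMsym]
      exact Matrix.vecMul_transpose M u
    rw [hβap, hβap, Matrix.dotProduct_mulVec, h2, dotProduct_comm]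
  have hsep : ∀ u : Fin n → k, (∀ x, β u x = 0) → u = 0 := by
    intro u hu
    have hvm : u ᵥ* M = 0 := by
      funext j
      have h := hu (Pi.single j 1)
      rw [hβap, Matrix.mulVec_single] at h
      simpa [Matrix.vecMul, dotProduct, mul_one] using h
    have hMinv : M * M⁻¹ = 1 := Matrix.mul_nonsing_inv M ((Matrix.isUnit_iff_isUnit_det M).mp hM)
    calc u = u ᵥ* 1 := (Matrix.vecMul_one u).symm
      _ = u ᵥ* (M * M⁻¹) := by rw [hMinv]
      _ = (u ᵥ* M) ᵥ* M⁻¹ := (Matrix.vecMul_vecMul u M M⁻¹).symm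
      _ = (0 : Fin n → k) ᵥ* M⁻¹ := by rw [hvm]
      _ = 0 := Matrix.zero_vecMul M⁻¹
  -- pairing identity
  have hpair : ∀ (C : Matrix (Fin n) (Fin n) k) (x y : Fin n → k),
      (C *ᵥ x) ⬝ᵥ (M *ᵥ y) = x ⬝ᵥ ((Cᵀ * M) *ᵥ y) := by
    intro C x y
    rw [Matrix.dotProduct_mulVec (C *ᵥ x) M y,
      show C *ᵥ x = x ᵥ* Cᵀ from (Matrix.vecMul_transpose C x).symm,
      Matrix.vecMul_vecMul, ← Matrix.dotProduct_mulVec]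
  -- hypotheses of the core theorem
  have hmvsq : ∀ C₀ : Matrix (Fin n) (Fin n) k, C₀ * C₀ = d • 1 →
      ∀ x, C₀.mulVecLin (C₀.mulVecLin x) = d • x := by
    intro C₀ hsq1 x
    simp only [Matrix.mulVecLin_apply]
    rw [Matrix.mulVec_mulVec, hsq1, Matrix.smul_mulVec, Matrix.one_mulVec]
  have hmvskew : ∀ C₀ : Matrix (Fin n) (Fin n) k, M * C₀ = -(C₀ᵀ * M) →
      ∀ x y, β (C₀.mulVecLin x) y = - β x (C₀.mulVecLin y) := by
    intro C₀ hsk x y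
    simp only [Matrix.mulVecLin_apply]
    rw [hβap, hβap, hpair C₀ x y, Matrix.mulVec_mulVec, hsk,
      Matrix.neg_mulVec, dotProduct_neg, neg_neg]
  obtain ⟨φ, hφiso, hφint⟩ := core_induction k hchar d hd (Module.finrank k (Fin n → k))
    (Fin n → k) (Fin n → k) rfl β β hsym hsym hsep B₀.mulVecLin A₀.mulVecLin
    (hmvsq B₀ hB₀sq1) (hmvsq A₀ hA₀sq1) (hmvskew B₀ hBskewM) (hmvskew A₀ hAskewM)
    (LinearEquiv.refl k (Fin n → k)) (fun x y => rfl)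
  -- extract the matrix
  set Q : Matrix (Fin n) (Fin n) k := LinearMap.toMatrix' (φ : (Fin n → k) →ₗ[k] (Fin n → k))
    with hQdef
  set Q' : Matrix (Fin n) (Fin n) k :=
    LinearMap.toMatrix' (φ.symm : (Fin n → k) →ₗ[k] (Fin n → k)) with hQ'def
  have hQmv : ∀ x, Q *ᵥ x = φ x := by
    intro x
    rw [hQdef, ← Matrix.toLin'_apply, Matrix.toLin'_toMatrix']
    rfl
  have hQ'mv : ∀ x, Q' *ᵥ x = φ.symm x := by
    intro x
    rw [hQ'def, ← Matrix.toLin'_apply, Matrix.toLin'_toMatrix']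
    rfl
  have hmulVec_ext : ∀ (N₁ N₂ : Matrix (Fin n) (Fin n) k),
      (∀ x, N₁ *ᵥ x = N₂ *ᵥ x) → N₁ = N₂ := by
    intro N₁ N₂ h
    ext i j
    have h' := congrFun (h (Pi.single j 1)) i
    simpa [Matrix.mulVec_single] using h'
  have hbilin_ext : ∀ (N₁ N₂ : Matrix (Fin n) (Fin n) k),
      (∀ x y, x ⬝ᵥ N₁ *ᵥ y = x ⬝ᵥ N₂ *ᵥ y) → N₁ = N₂ := by
    intro N₁ N₂ h
    apply hmulVec_ext
    intro y
    funext i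
    have h' := h (Pi.single i 1) y
    simpa [single_dotProduct] using h'
  have hQ'Q : Q' * Q = 1 := by
    apply hmulVec_ext
    intro x
    rw [← Matrix.mulVec_mulVec, hQmv, hQ'mv, LinearEquiv.symm_apply_apply,
      Matrix.one_mulVec]
  have hQint : A₀ * Q = Q * B₀ := by
    apply hmulVec_ext
    intro x
    rw [← Matrix.mulVec_mulVec, ← Matrix.mulVec_mulVec, hQmv, hQmv]
    have h := hφint x
    simp only [Matrix.mulVecLin_apply] at h
    exact h.symm
  have hQorth : Qᵀ * M * Q = M := by
    apply hbilin_ext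
    intro x y
    have h2 := hφiso x y
    rw [hβap, hβap] at h2
    calc x ⬝ᵥ (Qᵀ * M * Q) *ᵥ y
        = x ⬝ᵥ (Qᵀ * M) *ᵥ (Q *ᵥ y) := by rw [Matrix.mulVec_mulVec]
      _ = (Q *ᵥ x) ⬝ᵥ M *ᵥ (Q *ᵥ y) := (hpair Q x (Q *ᵥ y)).symm
      _ = (φ x) ⬝ᵥ M *ᵥ (φ y) := by rw [hQmv, hQmv]
      _ = x ⬝ᵥ M *ᵥ y := h2
  refine ⟨Q, hQorth, ?_⟩
  have hQL : (Q.map (algebraMap k L))⁻¹ = Q'.map (algebraMap k L) := by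
    apply Matrix.inv_eq_left_inv
    rw [hιap, hιap, ← _root_.map_mul, hQ'Q, _root_.map_one]
  rw [hQL, hAdef, hBdef, hιap, hιap, hιap, Matrix.mul_smul, Matrix.smul_mul]
  congr 1
  have hcomm : ι A₀ * ι Q = ι Q * ι B₀ := by
    rw [← _root_.map_mul, ← _root_.map_mul, hQint]
  calc ι Q' * ι A₀ * ι Q = ι Q' * (ι A₀ * ι Q) := by rw [mul_assoc]
    _ = ι Q' * (ι Q * ι B₀) := by rw [hcomm]
    _ = ι Q' * ι Q * ι B₀ := by rw [mul_assoc]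
    _ = ι B₀ := by rw [← _root_.map_mul, hQ'Q, _root_.map_one, one_mul]
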